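/- Let n ≥ 1 and let κ₁ ≤ κ₂ ≤ ... ≤ κₙ be a non-descending finite sequence of measurable cardinals, and let U₁, ..., Uₙ be normal measures over κ₁, ..., κₙ respectively. Let ν be a cardinal with ν < κ₁, let Aᵢ ∈ Uᵢ for each i, and let F : ∏ᵢ₌₁ⁿ Aᵢ → ν be any function on the set of increasing n-tuples from A₁, ..., Aₙ. Then there exist sets Hᵢ ⊆ Aᵢ with Hᵢ ∈ Uᵢ such that F is constant on ∏ᵢ₌₁ⁿ Hᵢ, i.e. the image of F restricted to ∏ᵢ₌₁ⁿ Hᵢ has exactly one element. -/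

import Mathlib

open Set

/-- `U` is a normal measure over `κ`: a κ-complete nonprincipal ultrafilter on
the ordinals below `κ` which is closed under diagonal intersections. -/
structure IsNormalMeasure (κ : Ordinal) (U : Set (Set Ordinal)) : Prop where
  sets_subset : ∀ A ∈ U, A ⊆ Set.Iio κ
  univ_mem : Set.Iio κ ∈ U
  empty_not_mem : (∅ : Set Ordinal) ∉ U
  superset_mem : ∀ A ∈ U, ∀ B ⊆ Set.Iio κ, A ⊆ B → B ∈ U
  inter_mem : ∀ A ∈ U, ∀ B ∈ U, A ∩ B ∈ U
  nonprincipal : ∀ α : Ordinal, {α} ∉ U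
  ultra : ∀ A ⊆ Set.Iio κ, A ∈ U ∨ Set.Iio κ \ A ∈ U
  complete : ∀ θ < κ, ∀ s : Ordinal → Set Ordinal,
      (∀ i < θ, s i ∈ U) → {β | β < κ ∧ ∀ i < θ, β ∈ s i} ∈ U
  normal : ∀ s : Ordinal → Set Ordinal, (∀ α < κ, s α ∈ U) →
      {β | β < κ ∧ ∀ α < β, β ∈ s α} ∈ U

/-- The increasing product `∏ᵢ Aᵢ`: the set of strictly increasing `n`-tuples
`x` of ordinals with `x i ∈ A i` for every `i`. -/
def IncProd {n : ℕ} (A : Fin n → Set Ordinal) : Set (Fin n → Ordinal) :=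
  {x | StrictMono x ∧ ∀ i, x i ∈ A i}

namespace HomogAux

lemma nonempty_of_mem {κ : Ordinal} {U : Set (Set Ordinal)} (h : IsNormalMeasure κ U)
    {S : Set Ordinal} (hS : S ∈ U) : S.Nonempty := by
  rcases S.eq_empty_or_nonempty with rfl | h'
  · exact absurd hS h.empty_not_mem
  · exact h'

lemma compl_singleton_mem {κ : Ordinal} {U : Set (Set Ordinal)} (h : IsNormalMeasure κ U)
    (i : Ordinal) : Iio κ \ {i} ∈ U := by
  rcases h.ultra ({i} ∩ Iio κ) inter_subset_right with hm | hm
  · exfalso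
    by_cases hi : i < κ
    · have he : ({i} : Set Ordinal) ∩ Iio κ = {i} := inter_eq_left.mpr (by simpa)
      rw [he] at hm; exact h.nonprincipal i hm
    · have he : ({i} : Set Ordinal) ∩ Iio κ = (∅ : Set Ordinal) := by
        ext x
        simp only [mem_inter_iff, mem_singleton_iff, mem_Iio, mem_empty_iff_false, iff_false,
          not_and]
        rintro rfl; exact hi
      rw [he] at hm; exact h.empty_not_mem hm
  · have he : Iio κ \ ({i} ∩ Iio κ) = Iio κ \ {i} := by
      ext x
      simp only [mem_diff, mem_inter_iff, mem_singleton_iff, mem_Iio]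
      tauto
    rwa [he] at hm

lemma tail_mem {κ : Ordinal} {U : Set (Set Ordinal)} (h : IsNormalMeasure κ U)
    (hlim : Order.IsSuccLimit κ) {α : Ordinal} (hα : α < κ) : Ioi α ∩ Iio κ ∈ U := by
  have hsucc : α + 1 < κ := by
    rw [Ordinal.add_one_eq_succ]; exact hlim.succ_lt hα
  have hmem := h.complete (α + 1) hsucc (fun i => Iio κ \ {i})
    (fun i _ => compl_singleton_mem h i)
  refine h.superset_mem _ hmem _ inter_subset_right ?_
  rintro β ⟨hβκ, hall⟩
  refine ⟨?_, hβκ⟩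
  by_contra hle
  simp only [mem_Ioi, not_lt] at hle
  have := hall β (by rw [Ordinal.add_one_eq_succ]; exact Order.lt_succ_iff.mpr hle)
  exact this.2 rfl

lemma fiber_mem {κ : Ordinal} {U : Set (Set Ordinal)} (h : IsNormalMeasure κ U)
    {ν : Ordinal} (hν : ν < κ) {B : Set Ordinal} (hB : B ∈ U)
    (f : Ordinal → Ordinal) (hf : ∀ β ∈ B, f β < ν) :
    ∃ c, {β ∈ B | f β = c} ∈ U := by
  by_contra hc
  push_neg at hc
  have hsub : ∀ c, {β ∈ B | f β = c} ⊆ Iio κ :=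
    fun c => (sep_subset _ _).trans (h.sets_subset B hB)
  have hcompl : ∀ c, Iio κ \ {β ∈ B | f β = c} ∈ U := by
    intro c
    rcases h.ultra _ (hsub c) with hm | hm
    · exact absurd hm (hc c)
    · exact hm
  have hmem := h.complete ν hν (fun c => Iio κ \ {β ∈ B | f β = c}) (fun c _ => hcompl c)
  have hib := h.inter_mem _ hmem _ hB
  obtain ⟨β, ⟨hβκ, hall⟩, hβB⟩ := nonempty_of_mem h hib
  exact (hall (f β) (hf β hβB)).2 ⟨hβB, rfl⟩

lemma strictMono_cons {n : ℕ} {α : Ordinal} {y : Fin n → Ordinal} (hy : StrictMono y)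
    (hαy : ∀ i, α < y i) : StrictMono (Fin.cons α y) := by
  intro a b hab
  induction b using Fin.cases with
  | zero => exact absurd hab (Fin.not_lt_zero a)
  | succ j =>
    induction a using Fin.cases with
    | zero => simpa using hαy j
    | succ i =>
      simp only [Fin.cons_succ]
      exact hy (Fin.succ_lt_succ_iff.mp hab)

lemma incprod_nonempty : ∀ (n : ℕ) (κ : Fin n → Ordinal), Monotone κ →
    (∀ i, Order.IsSuccLimit (κ i)) → ∀ (U : Fin n → Set (Set Ordinal)),
    (∀ i, IsNormalMeasure (κ i) (U i)) → ∀ H : Fin n → Set Ordinal,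
    (∀ i, H i ∈ U i) → (IncProd H).Nonempty
  | 0, κ, _, _, U, hU, H, hH => ⟨Fin.elim0, fun a => a.elim0, fun i => i.elim0⟩
  | n + 1, κ, hmono, hlim, U, hU, H, hH => by
    obtain ⟨α, hα⟩ := nonempty_of_mem (hU 0) (hH 0)
    have hακ : α < κ 0 := (hU 0).sets_subset _ (hH 0) hα
    have hH' : ∀ i : Fin n, H i.succ ∩ (Ioi α ∩ Iio (κ i.succ)) ∈ U i.succ := fun i =>
      (hU i.succ).inter_mem _ (hH i.succ) _
        (tail_mem (hU i.succ) (hlim i.succ) (hακ.trans_le (hmono (Fin.zero_le _))))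
    obtain ⟨y, hy1, hy2⟩ := incprod_nonempty n (fun i => κ i.succ)
      (hmono.comp Fin.strictMono_succ.monotone) (fun i => hlim i.succ)
      (fun i => U i.succ) (fun i => hU i.succ) _ hH'
    refine ⟨Fin.cons α y, strictMono_cons hy1 (fun i => (hy2 i).2.1), ?_⟩
    intro i
    induction i using Fin.cases with
    | zero => simpa using hα
    | succ j => simpa using (hy2 j).1

lemma main_aux : ∀ (n : ℕ) (κ : Fin n → Ordinal), Monotone κ →
    (∀ i, Order.IsSuccLimit (κ i)) → ∀ U : Fin n → Set (Set Ordinal),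
    (∀ i, IsNormalMeasure (κ i) (U i)) →
    ∀ ν : Ordinal, (∀ i, ν < κ i) → ∀ A : Fin n → Set Ordinal, (∀ i, A i ∈ U i) →
    ∀ F : (Fin n → Ordinal) → Ordinal, (∀ x ∈ IncProd A, F x < ν) →
    ∃ H : Fin n → Set Ordinal,
      (∀ i, H i ⊆ A i ∧ H i ∈ U i) ∧ ∃ c, F '' IncProd H = {c}
  | 0, κ, _, _, U, hU, ν, hν, A, hA, F, hF => by
    refine ⟨A, fun i => ⟨subset_rfl, hA i⟩, F Fin.elim0, ?_⟩
    have huniv : IncProd A = univ := by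
      ext x
      simp only [IncProd, mem_setOf_eq, mem_univ, iff_true]
      exact ⟨fun a => a.elim0, fun i => i.elim0⟩
    rw [huniv, image_univ]
    ext b
    simp only [mem_range, mem_singleton_iff]
    constructor
    · rintro ⟨x, rfl⟩
      congr 1
      exact Subsingleton.elim _ _
    · rintro rfl
      exact ⟨_, rfl⟩
  | n + 1, κ, hmono, hlim, U, hU, ν, hν, A, hA, F, hF => by
    have hmono' : Monotone (fun i : Fin n => κ i.succ) :=
      hmono.comp Fin.strictMono_succ.monotone
    have key : ∀ α : Ordinal, ∃ (H' : Fin n → Set Ordinal) (c : Ordinal),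
        (∀ i, H' i ∈ U i.succ ∧ H' i ⊆ A i.succ) ∧
        (α ∈ A 0 → (∀ i, H' i ⊆ Ioi α) ∧ ∀ y ∈ IncProd H', F (Fin.cons α y) = c) := by
      intro α
      by_cases hα : α ∈ A 0
      · have hακ : α < κ 0 := (hU 0).sets_subset _ (hA 0) hα
        have hA' : ∀ i : Fin n, A i.succ ∩ (Ioi α ∩ Iio (κ i.succ)) ∈ U i.succ := fun i =>
          (hU i.succ).inter_mem _ (hA i.succ) _
            (tail_mem (hU i.succ) (hlim i.succ) (hακ.trans_le (hmono (Fin.zero_le _))))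
        have hF' : ∀ y ∈ IncProd (fun i : Fin n => A i.succ ∩ (Ioi α ∩ Iio (κ i.succ))),
            F (Fin.cons α y) < ν := by
          intro y hy
          apply hF
          refine ⟨strictMono_cons hy.1 (fun i => (hy.2 i).2.1), ?_⟩
          intro i
          induction i using Fin.cases with
          | zero => simpa using hα
          | succ j => simpa using (hy.2 j).1
        obtain ⟨H', hH', c, hc⟩ := main_aux n (fun i => κ i.succ) hmono'
          (fun i => hlim i.succ) (fun i => U i.succ) (fun i => hU i.succ)
          ν (fun i => hν i.succ) _ hA' (fun y => F (Fin.cons α y)) hF'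
        refine ⟨H', c, fun i => ⟨(hH' i).2, (hH' i).1.trans inter_subset_left⟩, fun _ => ?_⟩
        refine ⟨fun i => (hH' i).1.trans (inter_subset_right.trans inter_subset_left), ?_⟩
        intro y hy
        have : F (Fin.cons α y) ∈ ({c} : Set Ordinal) := hc ▸ mem_image_of_mem _ hy
        exact this
      · exact ⟨fun i => A i.succ, 0, fun i => ⟨hA i.succ, subset_rfl⟩, fun h => absurd h hα⟩
    choose Hf cf hkey1 hkey2 using key
    have hcf_lt : ∀ α ∈ A 0, cf α < ν := by
      intro α hα
      obtain ⟨y, hy⟩ := incprod_nonempty n (fun i => κ i.succ) hmono'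
        (fun i => hlim i.succ) (fun i => U i.succ) (fun i => hU i.succ)
        (Hf α) (fun i => (hkey1 α i).1)
      have h2 := hkey2 α hα
      rw [← h2.2 y hy]
      apply hF
      refine ⟨strictMono_cons hy.1 (fun i => h2.1 i (hy.2 i)), ?_⟩
      intro i
      induction i using Fin.cases with
      | zero => simpa using hα
      | succ j => simpa using (hkey1 α j).2 (hy.2 j)
    obtain ⟨c, hcU⟩ := fiber_mem (hU 0) (hν 0) (hA 0) cf hcf_lt
    set H0 : Set Ordinal := {β ∈ A 0 | cf β = c} with hH0def
    set D : Fin n → Set Ordinal :=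
      fun i => A i.succ ∩ {β | β < κ i.succ ∧ ∀ α < β, β ∈ Hf α i} with hDdef
    have hD : ∀ i, D i ∈ U i.succ := fun i =>
      (hU i.succ).inter_mem _ (hA i.succ) _
        ((hU i.succ).normal (fun α => Hf α i) (fun α _ => (hkey1 α i).1))
    set H : Fin (n + 1) → Set Ordinal := Fin.cons H0 D with hHdef
    have hHU : ∀ i, H i ∈ U i := Fin.cases hcU hD
    have hHA : ∀ i, H i ⊆ A i := Fin.cases (sep_subset _ _) (fun i => inter_subset_left)
    refine ⟨H, fun i => ⟨hHA i, hHU i⟩, c, ?_⟩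
    have hconst : ∀ x ∈ IncProd H, F x = c := by
      intro x hx
      have hx0 : x 0 ∈ H0 := by
        have := hx.2 0
        simpa [hHdef] using this
      have hy : Fin.tail x ∈ IncProd (Hf (x 0)) := by
        constructor
        · intro a b hab
          exact hx.1 (Fin.succ_lt_succ_iff.mpr hab)
        · intro i
          have hmem : x i.succ ∈ D i := by
            have := hx.2 i.succ
            simpa [hHdef] using this
          exact hmem.2.2 (x 0) (hx.1 (Fin.succ_pos i))
      have heq := (hkey2 (x 0) hx0.1).2 _ hy
      rw [Fin.cons_self_tail] at heq
      rw [heq, hx0.2]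
    obtain ⟨x0, hx0⟩ := incprod_nonempty (n + 1) κ hmono hlim U hU H hHU
    ext b
    simp only [mem_image, mem_singleton_iff]
    constructor
    · rintro ⟨x, hx, rfl⟩
      exact hconst x hx
    · rintro rfl
      exact ⟨x0, hx0, hconst x0 hx0⟩

end HomogAux

/-- Lemma (homogeneity): for measurable cardinals `κ₁ ≤ ... ≤ κₙ` with normal
measures `U₁, ..., Uₙ`, sets `Aᵢ ∈ Uᵢ`, a cardinal `ν < κ₁`, and any function
`F : ∏ᵢ Aᵢ → ν`, there are `Hᵢ ⊆ Aᵢ` with `Hᵢ ∈ Uᵢ` such that the image of `F`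
restricted to `∏ᵢ Hᵢ` has exactly one element. -/
theorem homogeneous_product {n : ℕ} (hn : 0 < n)
    (κ : Fin n → Ordinal) (hmono : Monotone κ)
    (hcardinal : ∀ i, ((κ i).card).ord = κ i)
    (hmeasurable : ∀ i, Cardinal.aleph0 < (κ i).card)
    (U : Fin n → Set (Set Ordinal)) (hU : ∀ i, IsNormalMeasure (κ i) (U i))
    (ν : Ordinal) (hνcard : ν.card.ord = ν) (hν : ν < κ ⟨0, hn⟩)
    (A : Fin n → Set Ordinal) (hA : ∀ i, A i ∈ U i)
    (F : (Fin n → Ordinal) → Ordinal) (hF : ∀ x ∈ IncProd A, F x < ν) :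
    ∃ H : Fin n → Set Ordinal,
      (∀ i, H i ⊆ A i ∧ H i ∈ U i) ∧ ∃ c, F '' IncProd H = {c} := by
  have hlim : ∀ i, Order.IsSuccLimit (κ i) := fun i => by
    rw [← hcardinal i]; exact Cardinal.isSuccLimit_ord (hmeasurable i).le
  have hν' : ∀ i, ν < κ i := fun i =>
    hν.trans_le (hmono (by simp [Fin.le_def]))
  exact HomogAux.main_aux n κ hmono hlim U hU ν hν' A hA F hF
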